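/- Let X ⊆ ℝ^m be a nonempty compact convex set, let c : X × X → ℝ be a valid cost function, let γ > 0, and let P ⊆ X be closed with topological frontier ∂P. Let μ₀ be a probability measure on X × {0,1} with μ₀(∂P × {0,1}) = 0. Let R : X → X be a measurable map such that for every x ∈ X, R(x) maximizes x' ↦ γ·1{x' ∈ P} − c(x, x') over X, and let ν be the pushforward of μ₀ under (x,y) ↦ (R(x), y). Then either ν = μ₀, or ν(∂P × {0,1}) > 0; in particular, if ν ≠ μ₀ then ν assigns positive mass to a μ₀-null set and hence is not absolutely continuous with respect to μ₀. -/

import Mathlib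

open Set MeasureTheory

-- auxiliary: a strict convex combination differs from the endpoints
private lemma comb_ne_left {E : Type*} [AddCommGroup E] [Module ℝ E]
    [NoZeroSMulDivisors ℝ E] {x y : E} {a b : ℝ}
    (hab : a + b = 1) (hb : b ≠ 0) (hxy : x ≠ y) : a • x + b • y ≠ x := by
  intro h
  apply hxy
  have ha : a = 1 - b := by linarith
  subst ha
  have h1 : b • (y - x) = 0 := by
    have h2 : (1 - b) • x + b • y - x = 0 := by rw [h]; abel
    rw [sub_smul, one_smul] at h2
    rw [smul_sub]
    abel_nf
    abel_nf at h2
    linear_combination (norm := abel) h2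
  rcases smul_eq_zero.1 h1 with h | h
  · exact absurd h hb
  · exact (sub_eq_zero.1 h).symm

private lemma comb_ne_right {E : Type*} [AddCommGroup E] [Module ℝ E]
    [NoZeroSMulDivisors ℝ E] {x y : E} {a b : ℝ}
    (hab : a + b = 1) (ha : a ≠ 0) (hxy : x ≠ y) : a • x + b • y ≠ y := by
  intro h
  apply hxy
  have hb : b = 1 - a := by linarith
  subst hb
  have h1 : a • (x - y) = 0 := by
    have h2 : a • x + (1 - a) • y - y = 0 := by rw [h]; abel
    rw [sub_smul, one_smul] at h2
    rw [smul_sub]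
    linear_combination (norm := abel) h2
  rcases smul_eq_zero.1 h1 with h' | h'
  · exact absurd h' ha
  · exact sub_eq_zero.1 h' 

theorem stmt1 {m : ℕ} (X : Set (EuclideanSpace ℝ (Fin m)))
    (hXne : X.Nonempty) (hXcomp : IsCompact X) (hXconv : Convex ℝ X)
    (c : EuclideanSpace ℝ (Fin m) → EuclideanSpace ℝ (Fin m) → ℝ)
    (hc_cont : ContinuousOn (fun p => c p.1 p.2) (X ×ˢ X))
    (hc_zero : ∀ x ∈ X, c x x = 0)
    (hc_between : ∀ x ∈ X, ∀ x' ∈ X, ∀ z ∈ X,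
      z ∈ openSegment ℝ x x' → z ≠ x → z ≠ x' → c x z < c x x' ∧ c z x < c x' x)
    (γ : ℝ) (hγ : 0 < γ)
    (P : Set (EuclideanSpace ℝ (Fin m))) (hPclosed : IsClosed P) (hPX : P ⊆ X)
    (μ₀ : Measure (EuclideanSpace ℝ (Fin m) × Bool)) [IsProbabilityMeasure μ₀]
    (hμ₀X : μ₀ ((X ×ˢ (univ : Set Bool))ᶜ) = 0)
    (hmu0frontier : μ₀ (frontier P ×ˢ (univ : Set Bool)) = 0)
    (R : EuclideanSpace ℝ (Fin m) → EuclideanSpace ℝ (Fin m))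
    (hRmeas : Measurable R)
    (hRX : ∀ x ∈ X, R x ∈ X)
    (hRmax : ∀ x ∈ X, ∀ x' ∈ X,
      P.indicator (fun _ => γ) x' - c x x' ≤ P.indicator (fun _ => γ) (R x) - c x (R x))
    (ν : Measure (EuclideanSpace ℝ (Fin m) × Bool))
    (hν : ν = Measure.map (fun p => (R p.1, p.2)) μ₀) :
    (ν = μ₀ ∨ 0 < ν (frontier P ×ˢ (univ : Set Bool))) ∧
      (ν ≠ μ₀ → ¬ ν.AbsolutelyContinuous μ₀) := by
  -- Step 1: c x x' ≥ 0 on X × X.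
  have hc_nonneg : ∀ x ∈ X, ∀ x' ∈ X, 0 ≤ c x x' := by
    intro x hx x' hx'
    rcases eq_or_ne x' x with rfl | hne
    · exact le_of_eq (hc_zero _ (by assumption)).symm
    set z : ℝ → EuclideanSpace ℝ (Fin m) := fun t => (1 - t) • x + t • x' with hz
    have hzX : ∀ t ∈ Icc (0:ℝ) 1, z t ∈ X := by
      intro t ht
      exact hXconv hx hx' (by linarith [ht.2]) ht.1 (by ring)
    have hφ : Continuous fun t : ℝ => ((x, z t) : _ × _) := by
      apply continuous_const.prodMk
      exact ((continuous_const.sub continuous_id).smul continuous_const).add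
        (continuous_id.smul continuous_const)
    have hmaps : MapsTo (fun t : ℝ => ((x, z t) : _ × _)) (Icc 0 1) (X ×ˢ X) :=
      fun t ht => ⟨hx, hzX t ht⟩
    have hg : ContinuousOn (fun t => c x (z t)) (Icc (0:ℝ) 1) :=
      hc_cont.comp hφ.continuousOn hmaps
    have h0mem : (0:ℝ) ∈ Icc (0:ℝ) 1 := ⟨le_refl _, zero_le_one⟩
    have htend : Filter.Tendsto (fun t => c x (z t)) (nhdsWithin 0 (Ioo (0:ℝ) 1)) (nhds 0) := by
      have := (hg 0 h0mem).tendsto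
      have hz0 : c x (z 0) = 0 := by
        simp only [hz, zero_smul, sub_zero, one_smul, add_zero]
        exact hc_zero x hx
      rw [hz0] at this
      exact this.mono_left (nhdsWithin_mono _ Ioo_subset_Icc_self)
    haveI : (nhdsWithin (0:ℝ) (Ioo (0:ℝ) 1)).NeBot := by
      apply mem_closure_iff_nhdsWithin_neBot.1
      rw [closure_Ioo (by norm_num : (0:ℝ) ≠ 1)]
      exact ⟨le_refl _, zero_le_one⟩
    refine le_of_tendsto htend ?_
    filter_upwards [self_mem_nhdsWithin] with t ht
    have hzt : z t ∈ openSegment ℝ x x' := ⟨1 - t, t, by linarith [ht.2], ht.1, by ring, rfl⟩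
    have hz_ne_x : z t ≠ x := comb_ne_left (by ring) (ne_of_gt ht.1) hne.symm
    have hz_ne_x' : z t ≠ x' := comb_ne_right (by ring) (by linarith [ht.2] : (1:ℝ) - t ≠ 0) hne.symm
    exact le_of_lt (hc_between x hx x' hx' (z t) (hzX t ⟨le_of_lt ht.1, le_of_lt ht.2⟩)
      hzt hz_ne_x hz_ne_x').1
  -- Step 2: c x x' > 0 for x' ≠ x.
  have hc_pos : ∀ x ∈ X, ∀ x' ∈ X, x' ≠ x → 0 < c x x' := by
    intro x hx x' hx' hne
    set z : EuclideanSpace ℝ (Fin m) := (1/2 : ℝ) • x + (1/2 : ℝ) • x' with hz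
    have hzX : z ∈ X := hXconv hx hx' (by norm_num) (by norm_num) (by norm_num)
    have hzseg : z ∈ openSegment ℝ x x' := ⟨1/2, 1/2, by norm_num, by norm_num, by norm_num, rfl⟩
    have h1 : c x z < c x x' :=
      (hc_between x hx x' hx' z hzX hzseg (comb_ne_left (by norm_num) (by norm_num) hne.symm)
        (comb_ne_right (by norm_num) (by norm_num) hne.symm)).1
    exact lt_of_le_of_lt (hc_nonneg x hx z hzX) h1
  -- Step 3: if x ∈ X and R x ≠ x then R x ∈ frontier P.
  have key : ∀ x ∈ X, R x ≠ x → R x ∈ frontier P := by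
    intro x hx hRne
    have hRxX : R x ∈ X := hRX x hx
    have hcR : 0 < c x (R x) := hc_pos x hx (R x) hRxX hRne
    have hmax := hRmax x hx x hx
    rw [hc_zero x hx, sub_zero] at hmax
    -- first: x ∉ P
    have hxP : x ∉ P := by
      intro hxP
      rw [indicator_of_mem hxP] at hmax
      have hind : P.indicator (fun _ => γ) (R x) ≤ γ := by
        by_cases h : R x ∈ P
        · rw [indicator_of_mem h]
        · rw [indicator_of_notMem h]; exact le_of_lt hγ
      linarith
    rw [indicator_of_notMem hxP] at hmax
    -- R x ∈ P
    have hRP : R x ∈ P := by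
      by_contra h
      rw [indicator_of_notMem h] at hmax
      linarith
    rw [indicator_of_mem hRP] at hmax
    -- R x ∉ interior P
    have hRint : R x ∉ interior P := by
      intro hint
      rcases Metric.isOpen_iff.1 isOpen_interior (R x) hint with ⟨ε, hε, hball⟩
      have hd : 0 < ‖x - R x‖ := by
        rw [norm_pos_iff, sub_ne_zero]
        exact fun h => hRne h.symm
      set s : ℝ := min (1/2) (ε / (2 * ‖x - R x‖)) with hs
      have hs0 : 0 < s := lt_min (by norm_num) (div_pos hε (by linarith))
      have hs1 : s < 1 := lt_of_le_of_lt (min_le_left _ _) (by norm_num)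
      set z : EuclideanSpace ℝ (Fin m) := s • x + (1 - s) • R x with hz
      have hzX : z ∈ X := hXconv hx hRxX (le_of_lt hs0) (by linarith) (by ring)
      have hzseg : z ∈ openSegment ℝ x (R x) := ⟨s, 1 - s, hs0, by linarith, by ring, rfl⟩
      have hz_ne_x : z ≠ x := comb_ne_left (by ring) (by linarith : (1:ℝ) - s ≠ 0) hRne.symm
      have hz_ne_Rx : z ≠ R x := comb_ne_right (by ring) (ne_of_gt hs0) hRne.symm
      -- z ∈ P : distance to R x is small
      have hzP : z ∈ P := by
        apply interior_subset
        apply hball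
        rw [Metric.mem_ball, dist_eq_norm]
        have : z - R x = s • (x - R x) := by
          rw [hz, smul_sub]
          module
        rw [this, norm_smul, Real.norm_eq_abs, abs_of_pos hs0]
        have hsle : s ≤ ε / (2 * ‖x - R x‖) := min_le_right _ _
        calc s * ‖x - R x‖ ≤ (ε / (2 * ‖x - R x‖)) * ‖x - R x‖ := by
              apply mul_le_mul_of_nonneg_right hsle (norm_nonneg _)
          _ = ε / 2 := by field_simp
          _ < ε := by linarith
      -- strict improvement, contradicting optimality of R x
      have hlt : c x z < c x (R x) :=
        (hc_between x hx (R x) hRxX z hzX hzseg hz_ne_x hz_ne_Rx).1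
      have := hRmax x hx z hzX
      rw [indicator_of_mem hzP, indicator_of_mem hRP] at this
      linarith
    rw [hPclosed.frontier_eq]
    exact ⟨hRP, hRint⟩
  -- Measure theory part
  set f : EuclideanSpace ℝ (Fin m) × Bool → EuclideanSpace ℝ (Fin m) × Bool :=
    fun p => (R p.1, p.2) with hf_def
  have hf : Measurable f := (hRmeas.comp measurable_fst).prodMk measurable_snd
  have hB : MeasurableSet (frontier P ×ˢ (univ : Set Bool)) :=
    (isClosed_frontier.measurableSet).prod MeasurableSet.univ
  have hνB : ν (frontier P ×ˢ (univ : Set Bool)) = μ₀ (f ⁻¹' (frontier P ×ˢ (univ : Set Bool))) := by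
    rw [hν, Measure.map_apply hf hB]
  have main : ν = μ₀ ∨ 0 < ν (frontier P ×ˢ (univ : Set Bool)) := by
    by_cases h0 : ν (frontier P ×ˢ (univ : Set Bool)) = 0
    · left
      have hnull : μ₀ {p | ¬ f p = p} = 0 := by
        have hsub : {p | ¬ f p = p} ⊆
            f ⁻¹' (frontier P ×ˢ (univ : Set Bool)) ∪ (X ×ˢ (univ : Set Bool))ᶜ := by
          intro p hp
          by_cases hpX : p.1 ∈ X
          · left
            have hRne : R p.1 ≠ p.1 := fun h => hp (Prod.ext h rfl)
            exact ⟨key p.1 hpX hRne, mem_univ _⟩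
          · right
            simp only [mem_compl_iff, mem_prod, mem_univ, and_true]
            exact hpX
        exact measure_mono_null hsub (measure_union_null (hνB ▸ h0) hμ₀X)
      have haeeq : f =ᵐ[μ₀] id := by
        rw [Filter.eventuallyEq_iff_exists_mem]
        exact ⟨{p | f p = p}, by rwa [mem_ae_iff, compl_setOf], fun p hp => hp⟩
      rw [hν, Measure.map_congr haeeq, Measure.map_id]
    · right
      exact lt_of_le_of_ne zero_le (Ne.symm h0)
  refine ⟨main, fun hne hac => ?_⟩
  rcases main with heq | hpos
  · exact hne heq
  · rw [hac hmu0frontier] at hpos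
    exact lt_irrefl _ hpos
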